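/- Let ι : □ → \widehat{□} be the inclusion of the category of cocubical maps into the category of cotransverse maps, and let \widehat{L} : Psh(□) → Psh(\widehat{□}) be the left adjoint to the restriction functor along ι (the left Kan extension along ι^{op}). Then for all n ≥ 0 there are isomorphisms of presheaves \widehat{L}(□(−,n)) ≅ \widehat{□}(−,n) and \widehat{L}(∂□[n]) ≅ ∂\widehat{□}[n]. -/

import Mathlib

open CategoryTheory

open scoped ENNReal

/- The directed metric `d⃗₁` on the vertices `{0,1}^n`. -/
open Classical in
noncomputable def vd {n : ℕ} (x y : Fin n → Bool) : ℝ≥0∞ :=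
  if x ≤ y then ∑ i, (if x i = y i then 0 else 1) else ⊤

/-- A map `f : [m] → [n]` is cotransverse if it is strictly increasing and
takes pairs at `d⃗₁`-distance `1` to pairs at distance `1`. -/
def Cotransverse {m n : ℕ} (f : (Fin m → Bool) → (Fin n → Bool)) : Prop :=
  StrictMono f ∧ ∀ x y, vd x y = 1 → vd (f x) (f y) = 1

/-- A map `φ : [m] → [n]` is cocubical (a composite of coface maps). -/
def Cocubical {m n : ℕ} (φ : (Fin m → Bool) → (Fin n → Bool)) : Prop :=
  ∃ (ι : Fin m → Fin n) (b : Fin n → Bool), StrictMono ι ∧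
    (∀ x i, φ x (ι i) = x i) ∧
    (∀ x j, j ∉ Set.range ι → φ x j = b j)

lemma cotransverse_id {n : ℕ} :
    Cotransverse (id : (Fin n → Bool) → (Fin n → Bool)) :=
  ⟨strictMono_id, fun _ _ h => h⟩

lemma cotransverse_comp {m n p : ℕ} {f : (Fin m → Bool) → (Fin n → Bool)}
    {g : (Fin n → Bool) → (Fin p → Bool)} (hf : Cotransverse f)
    (hg : Cotransverse g) : Cotransverse (g ∘ f) :=
  ⟨hg.1.comp hf.1, fun x y h => hg.2 _ _ (hf.2 x y h)⟩

lemma Cotransverse.dim_le {m n : ℕ} {f : (Fin m → Bool) → (Fin n → Bool)}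
    (hf : Cotransverse f) : m ≤ n := by
  classical
  set N : (Fin n → Bool) → ℕ := fun u => ∑ i, (if u i then 1 else 0) with hN
  have hNlt : ∀ u v : Fin n → Bool, u < v → N u < N v := by
    intro u v huv
    rw [Pi.lt_def] at huv
    obtain ⟨hle, i, hi⟩ := huv
    refine Finset.sum_lt_sum (fun j _ => ?_) ⟨i, Finset.mem_univ i, ?_⟩
    · have := hle j
      revert this
      cases u j <;> cases v j <;> simp
    · revert hi
      cases u i <;> cases v i <;> simp
  have hNle : ∀ u : Fin n → Bool, N u ≤ n := by
    intro u
    calc N u ≤ ∑ _i : Fin n, 1 := Finset.sum_le_sum (fun j _ => by split <;> simp)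
    _ = n := by simp
  have hchain : StrictMono (fun j : Fin (m + 1) =>
      (⟨N (f (fun i => decide ((i : ℕ) < (j : ℕ)))),
        Nat.lt_succ_of_le (hNle _)⟩ : Fin (n + 1))) := by
    intro j j' hjj
    simp only [Fin.mk_lt_mk]
    apply hNlt
    apply hf.1
    rw [Pi.lt_def]
    constructor
    · intro i
      have : (i : ℕ) < (j : ℕ) → (i : ℕ) < (j' : ℕ) := fun h => h.trans hjj
      revert this
      by_cases h1 : (i : ℕ) < (j : ℕ) <;> by_cases h2 : (i : ℕ) < (j' : ℕ) <;>
        simp [h1, h2]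
    · refine ⟨⟨(j : ℕ), lt_of_lt_of_le hjj (Nat.lt_succ_iff.mp j'.2)⟩, ?_⟩
      simp [hjj]
  simpa using Nat.succ_le_succ_iff.mp (by
    simpa using Fintype.card_le_of_injective _ hchain.injective)

lemma cocubical_id {n : ℕ} :
    Cocubical (id : (Fin n → Bool) → (Fin n → Bool)) :=
  ⟨id, fun _ => false, strictMono_id, fun _ _ => rfl,
    fun _ j hj => absurd ⟨j, rfl⟩ hj⟩

lemma cocubical_comp {m n p : ℕ} {f : (Fin m → Bool) → (Fin n → Bool)}
    {g : (Fin n → Bool) → (Fin p → Bool)} (hf : Cocubical f)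
    (hg : Cocubical g) : Cocubical (g ∘ f) := by
  classical
  obtain ⟨ι₁, b₁, hι₁, h₁, h₁'⟩ := hf
  obtain ⟨ι₂, b₂, hι₂, h₂, h₂'⟩ := hg
  refine ⟨ι₂ ∘ ι₁, fun j => if h : ∃ i, ι₂ i = j then b₁ h.choose else b₂ j,
    hι₂.comp hι₁, ?_, ?_⟩
  · intro x i
    simp only [Function.comp_apply, h₂, h₁]
  · intro x j hj
    by_cases h : ∃ i, ι₂ i = j
    · obtain ⟨i, hi⟩ := h
      have hib : i ∉ Set.range ι₁ := by
        rintro ⟨i', rfl⟩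
        exact hj ⟨i', by simpa using hi⟩
      have hval : (g ∘ f) x j = b₁ i := by
        subst hi
        rw [Function.comp_apply, h₂]
        exact h₁' x i hib
      rw [hval]
      show b₁ i = if h : ∃ i, ι₂ i = j then b₁ h.choose else b₂ j
      rw [dif_pos (⟨i, hi⟩ : ∃ i, ι₂ i = j)]
      congr 1
      exact (hι₂.injective
        ((Exists.choose_spec (⟨i, hi⟩ : ∃ i, ι₂ i = j)).trans hi.symm)).symm
    · show (g ∘ f) x j = if h : ∃ i, ι₂ i = j then b₁ h.choose else b₂ j
      rw [dif_neg h]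
      exact h₂' (f x) j (by rintro ⟨i, hi⟩; exact h ⟨i, hi⟩)

/-- Every cocubical map is cotransverse. -/
lemma Cocubical.cotransverse {m n : ℕ} {φ : (Fin m → Bool) → (Fin n → Bool)}
    (hφ : Cocubical φ) : Cotransverse φ := by
  classical
  obtain ⟨ι, b, hι, h₁, h₂⟩ := hφ
  have hmono : Monotone φ := by
    intro x y hxy j
    by_cases hj : j ∈ Set.range ι
    · obtain ⟨i, rfl⟩ := hj
      rw [h₁, h₁]; exact hxy i
    · rw [h₂ x j hj, h₂ y j hj]
  have hsum : ∀ x y : Fin m → Bool,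
      (∑ j, (if φ x j = φ y j then (0:ℝ≥0∞) else 1))
        = ∑ i, (if x i = y i then (0:ℝ≥0∞) else 1) := by
    intro x y
    rw [← Finset.sum_subset (Finset.subset_univ (Finset.univ.image ι))
      (fun j _ hj => by
        rw [if_pos]
        rw [h₂ x j (by simpa using hj), h₂ y j (by simpa using hj)])]
    rw [Finset.sum_image (fun i _ j _ h => hι.injective h)]
    refine Finset.sum_congr rfl fun i _ => ?_
    rw [h₁, h₁]
  constructor
  · intro x y hxy
    rw [Pi.lt_def] at hxy ⊢
    obtain ⟨hle, i, hi⟩ := hxy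
    exact ⟨hmono hle, ι i, by rw [h₁, h₁]; exact hi⟩
  · intro x y hxy
    simp only [vd] at hxy ⊢
    by_cases hle : x ≤ y
    · rw [if_pos hle] at hxy
      rw [if_pos (hmono hle), hsum x y]
      exact hxy
    · rw [if_neg hle] at hxy
      exact absurd hxy (by simp)

lemma Cocubical.dim_le {m n : ℕ} {f : (Fin m → Bool) → (Fin n → Bool)}
    (hf : Cocubical f) : m ≤ n := by
  obtain ⟨ι, b, hι, -, -⟩ := hf
  simpa using Fintype.card_le_of_injective ι hι.injective

/-- The objects of the box category `□`: natural numbers `n`, standing for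
the poset `[n] = {0,1}ⁿ`. -/
structure CubeObj where
  dim : ℕ

/-- The objects of the extended category `□̂`. -/
structure TransObj where
  dim : ℕ

/-- The category `□` generated by the cocubical maps. -/
instance : Category CubeObj where
  Hom a b := {f : (Fin a.dim → Bool) → (Fin b.dim → Bool) // Cocubical f}
  id a := ⟨id, cocubical_id⟩
  comp f g := ⟨g.1 ∘ f.1, cocubical_comp f.2 g.2⟩
  id_comp f := Subtype.ext rfl
  comp_id f := Subtype.ext rfl
  assoc f g h := Subtype.ext rfl

/-- The category `□̂` generated by the cotransverse maps. -/
instance : Category TransObj where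
  Hom a b := {f : (Fin a.dim → Bool) → (Fin b.dim → Bool) // Cotransverse f}
  id a := ⟨id, cotransverse_id⟩
  comp f g := ⟨g.1 ∘ f.1, cotransverse_comp f.2 g.2⟩
  id_comp f := Subtype.ext rfl
  comp_id f := Subtype.ext rfl
  assoc f g h := Subtype.ext rfl

/-- The inclusion functor `ι : □ → □̂`. -/
def cubeInclusion : CubeObj ⥤ TransObj where
  obj a := ⟨a.dim⟩
  map f := ⟨f.1, f.2.cotransverse⟩
  map_id a := Subtype.ext rfl
  map_comp f g := Subtype.ext rfl

/-- The boundary `∂□[n]` of the representable precubical set `□[n]`: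
`(∂□[n])_p = □(p, n)` for `p < n` and `∅` for `p ≥ n`. -/
def boundaryCube (n : ℕ) : CubeObjᵒᵖ ⥤ Type where
  obj p := {f : (Fin p.unop.dim → Bool) → (Fin n → Bool) //
    Cocubical f ∧ p.unop.dim < n}
  map {p q} g := TypeCat.ofHom fun f => ⟨f.1 ∘ g.unop.1, cocubical_comp g.unop.2 f.2.1,
    lt_of_le_of_lt g.unop.2.dim_le f.2.2⟩
  map_id p := by ext f; rfl
  map_comp g h := by ext f; rfl

/-- The boundary `∂□̂[n]` of the representable symmetric transverse set `□̂[n]`: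
`(∂□̂[n])_p = □̂(p, n)` for `p < n` and `∅` for `p ≥ n`. -/
def boundaryTrans (n : ℕ) : TransObjᵒᵖ ⥤ Type where
  obj p := {f : (Fin p.unop.dim → Bool) → (Fin n → Bool) //
    Cotransverse f ∧ p.unop.dim < n}
  map {p q} g := TypeCat.ofHom fun f => ⟨f.1 ∘ g.unop.1, cotransverse_comp g.unop.2 f.2.1,
    lt_of_le_of_lt g.unop.2.dim_le f.2.2⟩
  map_id p := by ext f; rfl
  map_comp g h := by ext f; rfl

namespace Stmt14Aux

lemma cmono {m n : ℕ} {f : (Fin m → Bool) → (Fin n → Bool)}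
    (hf : Cotransverse f) : Monotone f := by
  intro x y hxy
  rcases eq_or_lt_of_le hxy with h | h
  · exact h ▸ le_rfl
  · exact (hf.1 h).le

lemma vd_eq_one_iff {n : ℕ} {u v : Fin n → Bool} :
    vd u v = 1 ↔ u ≤ v ∧ (Finset.univ.filter fun j => ¬ u j = v j).card = 1 := by
  classical
  unfold vd
  by_cases h : u ≤ v
  · rw [if_pos h]
    have hsum : (∑ i, if u i = v i then (0:ℝ≥0∞) else 1)
        = ((Finset.univ.filter fun j => ¬ u j = v j).card : ℝ≥0∞) := by
      rw [Finset.sum_ite, Finset.sum_const, Finset.sum_const, smul_zero, zero_add,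
        nsmul_eq_mul, mul_one]
    rw [hsum]
    constructor
    · intro hc; refine ⟨h, ?_⟩; exact_mod_cast hc
    · rintro ⟨-, hc⟩; rw [hc]; norm_num
  · rw [if_neg h]
    simp only [h, false_and, iff_false]
    simp

lemma card_true_split {n : ℕ} {u v : Fin n → Bool} (hle : u ≤ v) :
    (Finset.univ.filter fun j => v j = true).card
      = (Finset.univ.filter fun j => u j = true).card
        + (Finset.univ.filter fun j => ¬ u j = v j).card := by
  classical
  rw [← Finset.card_union_of_disjoint ?hd]
  · congr 1
    ext j
    have hj := hle j
    simp only [Finset.mem_union, Finset.mem_filter, Finset.mem_univ, true_and]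
    cases hu : u j <;> cases hv : v j <;> simp_all [Bool.le_iff_imp]
  case hd =>
    rw [Finset.disjoint_left]
    intro j hj hj'
    have hle' := hle j
    simp only [Finset.mem_filter, Finset.mem_univ, true_and] at hj hj'
    cases hv : v j <;> simp_all [Bool.le_iff_imp]

/-- The "support" of a map between cubes. -/
def Sfin {q n : ℕ} (f : (Fin q → Bool) → (Fin n → Bool)) : Finset (Fin n) :=
  Finset.univ.filter fun j => ¬ f (fun _ => false) j = f (fun _ => true) j

lemma mem_Sfin {q n : ℕ} {f : (Fin q → Bool) → (Fin n → Bool)} {j : Fin n} :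
    j ∈ Sfin f ↔ ¬ f (fun _ => false) j = f (fun _ => true) j := by
  simp [Sfin]

lemma card_Sfin {q n : ℕ} {f : (Fin q → Bool) → (Fin n → Bool)}
    (hf : Cotransverse f) : (Sfin f).card = q := by
  classical
  let N : (Fin n → Bool) → ℕ := fun u => (Finset.univ.filter fun j => u j = true).card
  let x : ℕ → (Fin q → Bool) := fun k i => decide ((i:ℕ) < k)
  have hone : ∀ k, k < q → vd (x k) (x (k+1)) = 1 := by
    intro k hk
    rw [vd_eq_one_iff]
    constructor
    · intro i
      show decide ((i:ℕ) < k) ≤ decide ((i:ℕ) < k+1)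
      by_cases h : (i:ℕ) < k
      · simp [h, Nat.lt_succ_of_lt h]
      · rw [decide_eq_false h]; exact Bool.false_le _
    · have : (Finset.univ.filter fun i : Fin q => ¬ x k i = x (k+1) i) = {⟨k, hk⟩} := by
        ext i
        simp only [Finset.mem_filter, Finset.mem_univ, true_and, Finset.mem_singleton]
        show (¬ decide ((i:ℕ) < k) = decide ((i:ℕ) < k+1)) ↔ _
        constructor
        · intro h
          apply Fin.ext
          by_cases h1 : (i:ℕ) < k <;> by_cases h2 : (i:ℕ) < k+1 <;> simp_all <;> omega
        · rintro rfl
          simp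
      rw [this, Finset.card_singleton]
  have hstep : ∀ k, k < q → N (f (x (k+1))) = N (f (x k)) + 1 := by
    intro k hk
    have h2 := (vd_eq_one_iff).1 (hf.2 _ _ (hone k hk))
    show (Finset.univ.filter fun j => f (x (k+1)) j = true).card
      = (Finset.univ.filter fun j => f (x k) j = true).card + 1
    rw [card_true_split h2.1, h2.2]
  have hiter : ∀ k, k ≤ q → N (f (x k)) = N (f (x 0)) + k := by
    intro k
    induction k with
    | zero => intro _; simp
    | succ k ih =>
      intro hk
      rw [hstep k (by omega), ih (by omega)]; omega
  have hx0 : x 0 = (fun _ => false) := funext fun i => by simp [x]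
  have hxq : x q = (fun _ => true) := funext fun i => by simp [x, i.isLt]
  have hfin : N (f (fun _ => true)) = N (f (fun _ => false)) + q := by
    rw [← hx0, ← hxq]; exact hiter q le_rfl
  have hle : f (fun _ => false) ≤ f (fun _ => true) := cmono hf (fun i => Bool.false_le _)
  have hsplit : N (f (fun _ => true)) = N (f (fun _ => false)) + (Sfin f).card :=
    card_true_split hle
  omega

lemma const_off_Sfin {q n : ℕ} {f : (Fin q → Bool) → (Fin n → Bool)}
    (hf : Cotransverse f) {j : Fin n} (hj : j ∉ Sfin f) (x : Fin q → Bool) :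
    f x j = f (fun _ => false) j := by
  rw [mem_Sfin, not_not] at hj
  have h1 : f (fun _ => false) j ≤ f x j := cmono hf (fun i => Bool.false_le _) j
  have h2 : f x j ≤ f (fun _ => true) j := cmono hf (fun i => Bool.le_true _) j
  exact le_antisymm (le_trans h2 (le_of_eq hj.symm)) h1

end Stmt14Aux
namespace Stmt14Aux

/-- Order iso enumerating the support. -/
noncomputable def eF {q n : ℕ} {f : (Fin q → Bool) → (Fin n → Bool)}
    (hf : Cotransverse f) : Fin q ≃o {x // x ∈ Sfin f} :=
  (Sfin f).orderIsoOfFin (card_Sfin hf)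

/-- The "transversal part" of the canonical factorization. -/
noncomputable def gF {q n : ℕ} {f : (Fin q → Bool) → (Fin n → Bool)}
    (hf : Cotransverse f) : (Fin q → Bool) → Fin q → Bool :=
  fun x i => f x ((eF hf i : Fin n))

/-- The "cocubical part" of the canonical factorization. -/
noncomputable def hF {q n : ℕ} {f : (Fin q → Bool) → (Fin n → Bool)}
    (hf : Cotransverse f) : (Fin q → Bool) → Fin n → Bool :=
  fun y j => if h : j ∈ Sfin f then y ((eF hf).symm ⟨j, h⟩) else f (fun _ => false) j

lemma hF_gF {q n : ℕ} {f : (Fin q → Bool) → (Fin n → Bool)}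
    (hf : Cotransverse f) (x : Fin q → Bool) : hF hf (gF hf x) = f x := by
  funext j
  unfold hF gF
  by_cases h : j ∈ Sfin f
  · rw [dif_pos h]
    congr 1
    rw [OrderIso.apply_symm_apply]
  · rw [dif_neg h]
    exact (const_off_Sfin hf h x).symm

lemma eF_strictMono {q n : ℕ} {f : (Fin q → Bool) → (Fin n → Bool)}
    (hf : Cotransverse f) : StrictMono (fun i => ((eF hf i : Fin n))) := by
  intro i i' h
  exact Subtype.coe_lt_coe.2 ((eF hf).strictMono h)

lemma hF_cocubical {q n : ℕ} {f : (Fin q → Bool) → (Fin n → Bool)}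
    (hf : Cotransverse f) : Cocubical (hF hf) := by
  refine ⟨fun i => ((eF hf i : Fin n)), fun j => f (fun _ => false) j,
    eF_strictMono hf, ?_, ?_⟩
  · intro x i
    unfold hF
    rw [dif_pos (eF hf i).2]
    congr 1
    apply (eF hf).injective
    apply Subtype.ext
    rw [OrderIso.apply_symm_apply]
  · intro x j hj
    unfold hF
    rw [dif_neg]
    intro h
    exact hj ⟨(eF hf).symm ⟨j, h⟩, congrArg Subtype.val ((eF hf).apply_symm_apply ⟨j, h⟩)⟩

lemma gF_cotransverse {q n : ℕ} {f : (Fin q → Bool) → (Fin n → Bool)}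
    (hf : Cotransverse f) : Cotransverse (gF hf) := by
  constructor
  · intro x y hxy
    have hfx := hf.1 hxy
    rw [Pi.lt_def] at hfx ⊢
    obtain ⟨hle, j, hj⟩ := hfx
    have hjS : j ∈ Sfin f := by
      rw [mem_Sfin]
      intro hc
      have h1 := const_off_Sfin hf (by rw [mem_Sfin, not_not]; exact hc) x
      have h2 := const_off_Sfin hf (by rw [mem_Sfin, not_not]; exact hc) y
      rw [h1, h2] at hj
      exact lt_irrefl _ hj
    refine ⟨fun i => hle _, (eF hf).symm ⟨j, hjS⟩, ?_⟩
    unfold gF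
    have hc : ((eF hf ((eF hf).symm ⟨j, hjS⟩) : Fin n)) = j :=
      congrArg Subtype.val ((eF hf).apply_symm_apply _)
    rw [hc]
    exact hj
  · intro x y hxy
    have h2 := (vd_eq_one_iff).1 (hf.2 _ _ hxy)
    rw [vd_eq_one_iff]
    refine ⟨fun i => h2.1 _, ?_⟩
    rw [← h2.2]
    apply Finset.card_bij (fun i _ => ((eF hf i : Fin n)))
    · intro i hi
      simp only [Finset.mem_filter, Finset.mem_univ, true_and] at hi ⊢
      exact hi
    · intro i _ i' _ h
      exact (eF hf).injective (Subtype.ext h)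
    · intro j hj
      simp only [Finset.mem_filter, Finset.mem_univ, true_and] at hj
      have hjS : j ∈ Sfin f := by
        rw [mem_Sfin]
        intro hc
        have h1 := const_off_Sfin hf (by rw [mem_Sfin, not_not]; exact hc) x
        have h2' := const_off_Sfin hf (by rw [mem_Sfin, not_not]; exact hc) y
        rw [h1, h2'] at hj
        exact hj rfl
      refine ⟨(eF hf).symm ⟨j, hjS⟩, ?_, ?_⟩
      · have hc : ((eF hf ((eF hf).symm ⟨j, hjS⟩) : Fin n)) = j :=
          congrArg Subtype.val ((eF hf).apply_symm_apply _)
        simp only [Finset.mem_filter, Finset.mem_univ, true_and]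
        show ¬ gF hf x _ = gF hf y _
        unfold gF
        rw [hc]
        exact hj
      · exact congrArg Subtype.val ((eF hf).apply_symm_apply ⟨j, hjS⟩)

end Stmt14Aux
namespace Stmt14Aux

lemma Sfin_comp_subset {p q n : ℕ} {f : (Fin q → Bool) → (Fin n → Bool)}
    {m : (Fin p → Bool) → (Fin q → Bool)} (hf : Cotransverse f)
    (hm : Cotransverse m) : Sfin (f ∘ m) ⊆ Sfin f := by
  intro j hj
  rw [mem_Sfin] at hj ⊢
  intro hc
  have h1 := const_off_Sfin hf (by rw [mem_Sfin, not_not]; exact hc) (m (fun _ => false))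
  have h2 := const_off_Sfin hf (by rw [mem_Sfin, not_not]; exact hc) (m (fun _ => true))
  exact hj (h1.trans h2.symm)

/-- The connecting cocubical map between canonical factorizations. -/
noncomputable def kF {p q n : ℕ} {f : (Fin q → Bool) → (Fin n → Bool)}
    {m : (Fin p → Bool) → (Fin q → Bool)} (hf : Cotransverse f)
    (hm : Cotransverse m) : (Fin p → Bool) → Fin q → Bool :=
  fun y a =>
    if h : ((eF hf a : Fin n)) ∈ Sfin (f ∘ m) then
      y ((eF (cotransverse_comp hm hf)).symm ⟨_, h⟩)
    else f (m (fun _ => false)) ((eF hf a : Fin n))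

lemma kF_cocubical {p q n : ℕ} {f : (Fin q → Bool) → (Fin n → Bool)}
    {m : (Fin p → Bool) → (Fin q → Bool)} (hf : Cotransverse f)
    (hm : Cotransverse m) : Cocubical (kF hf hm) := by
  set hfm := cotransverse_comp hm hf with hfmdef
  refine ⟨fun i => (eF hf).symm ⟨(eF hfm i : Fin n), Sfin_comp_subset hf hm (eF hfm i).2⟩,
    fun a => f (m (fun _ => false)) ((eF hf a : Fin n)), ?_, ?_, ?_⟩
  · intro i i' h
    apply (eF hf).symm.strictMono
    exact Subtype.mk_lt_mk.2 (Subtype.coe_lt_coe.2 ((eF hfm).strictMono h))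
  · intro x i
    unfold kF
    have he : eF hf ((eF hf).symm ⟨(eF hfm i : Fin n), Sfin_comp_subset hf hm (eF hfm i).2⟩)
        = ⟨(eF hfm i : Fin n), Sfin_comp_subset hf hm (eF hfm i).2⟩ :=
      (eF hf).apply_symm_apply _
    have hc : ((eF hf ((eF hf).symm ⟨(eF hfm i : Fin n), Sfin_comp_subset hf hm (eF hfm i).2⟩) : Fin n))
        = (eF hfm i : Fin n) := congrArg Subtype.val he
    rw [dif_pos (by rw [hc]; exact (eF hfm i).2)]
    have : ∀ (z : Fin n) (hz : z ∈ Sfin (f ∘ m)) (hz' : z = (eF hfm i : Fin n)),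
        x ((eF hfm).symm ⟨z, hz⟩) = x i := by
      intro z hz hz'
      congr 1
      apply (eF hfm).injective
      apply Subtype.ext
      rw [(eF hfm).apply_symm_apply]
      exact hz'
    exact this _ _ hc
  · intro x a ha
    unfold kF
    rw [dif_neg]
    intro h
    apply ha
    refine ⟨(eF hfm).symm ⟨(eF hf a : Fin n), h⟩, ?_⟩
    have key : ∀ (z : Fin n) (hz : z ∈ Sfin f), z = ((eF hf a : Fin n)) →
        (eF hf).symm ⟨z, hz⟩ = a := by
      intro z hz hz'
      subst hz'
      rw [show (⟨(eF hf a : Fin n), hz⟩ : {x // x ∈ Sfin f}) = eF hf a from Subtype.ext rfl,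
        (eF hf).symm_apply_apply]
    exact key _ _ (congrArg Subtype.val ((eF hfm).apply_symm_apply ⟨(eF hf a : Fin n), h⟩))

lemma hF_kF {p q n : ℕ} {f : (Fin q → Bool) → (Fin n → Bool)}
    {m : (Fin p → Bool) → (Fin q → Bool)} (hf : Cotransverse f)
    (hm : Cotransverse m) (y : Fin p → Bool) :
    hF hf (kF hf hm y) = hF (cotransverse_comp hm hf) y := by
  set hfm := cotransverse_comp hm hf with hfmdef
  funext j
  unfold hF
  by_cases h : j ∈ Sfin f
  · rw [dif_pos h]
    unfold kF
    have hc : ((eF hf ((eF hf).symm ⟨j, h⟩) : Fin n)) = j :=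
      congrArg Subtype.val ((eF hf).apply_symm_apply _)
    by_cases h2 : j ∈ Sfin (f ∘ m)
    · rw [dif_pos (by rw [hc]; exact h2), dif_pos h2]
      have : ∀ (z : Fin n) (hz : z ∈ Sfin (f ∘ m)) (hz' : z = j),
          y ((eF hfm).symm ⟨z, hz⟩) = y ((eF hfm).symm ⟨j, h2⟩) := by
        intro z hz hz'
        congr 1
        apply congrArg
        exact Subtype.ext hz'
      exact this _ _ hc
    · rw [dif_neg (by rw [hc]; exact h2), dif_neg h2, hc]
      rfl
  · rw [dif_neg h, dif_neg (fun hc => h (Sfin_comp_subset hf hm hc))]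
    exact (const_off_Sfin hf h (m (fun _ => false))).symm

lemma kF_gF {p q n : ℕ} {f : (Fin q → Bool) → (Fin n → Bool)}
    {m : (Fin p → Bool) → (Fin q → Bool)} (hf : Cotransverse f)
    (hm : Cotransverse m) (x : Fin p → Bool) :
    kF hf hm (gF (cotransverse_comp hm hf) x) = gF hf (m x) := by
  set hfm := cotransverse_comp hm hf with hfmdef
  funext a
  show kF hf hm (gF hfm x) a = f (m x) ((eF hf a : Fin n))
  unfold kF
  by_cases h : ((eF hf a : Fin n)) ∈ Sfin (f ∘ m)
  · rw [dif_pos h]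
    have hc : ((eF hfm ((eF hfm).symm ⟨(eF hf a : Fin n), h⟩) : Fin n))
        = ((eF hf a : Fin n)) :=
      congrArg Subtype.val ((eF hfm).apply_symm_apply _)
    show (f ∘ m) x ((eF hfm ((eF hfm).symm ⟨(eF hf a : Fin n), h⟩) : Fin n)) = _
    rw [hc]
    rfl
  · rw [dif_neg h]
    exact (const_off_Sfin hfm h x).symm

lemma gF_of_cocubical {q n : ℕ} {f : (Fin q → Bool) → (Fin n → Bool)}
    (hc : Cocubical f) (hf : Cotransverse f) : gF hf = id := by
  obtain ⟨ι, b, hι, h1, h2⟩ := hc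
  have hmem : ∀ i, ι i ∈ Sfin f := by
    intro i
    rw [mem_Sfin, h1, h1]
    simp
  have hcoe : ∀ i, ((eF hf i : Fin n)) = ι i := by
    have hu := Finset.orderEmbOfFin_unique (card_Sfin hf) hmem hι
    intro i
    rw [show ((eF hf i : Fin n)) = (Sfin f).orderEmbOfFin (card_Sfin hf) i from
      (Sfin f).coe_orderIsoOfFin_apply (card_Sfin hf) i]
    exact (congrFun hu i).symm
  funext x i
  unfold gF
  rw [hcoe, h1]
  rfl

lemma mem_Sfin_range {q n : ℕ} {f : (Fin q → Bool) → (Fin n → Bool)}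
    {ι : Fin q → Fin n} {b : Fin n → Bool} (h1 : ∀ x i, f x (ι i) = x i)
    (h2 : ∀ x j, j ∉ Set.range ι → f x j = b j) {j : Fin n} (hj : j ∈ Sfin f) :
    j ∈ Set.range ι := by
  by_contra hr
  rw [mem_Sfin] at hj
  exact hj ((h2 _ j hr).trans (h2 _ j hr).symm)

lemma hF_of_cocubical {q n : ℕ} {f : (Fin q → Bool) → (Fin n → Bool)}
    (hc : Cocubical f) (hf : Cotransverse f) : hF hf = f := by
  obtain ⟨ι, b, hι, h1, h2⟩ := hc
  have hmem : ∀ i, ι i ∈ Sfin f := by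
    intro i
    rw [mem_Sfin, h1, h1]
    simp
  have hcoe : ∀ i, ((eF hf i : Fin n)) = ι i := by
    have hu := Finset.orderEmbOfFin_unique (card_Sfin hf) hmem hι
    intro i
    rw [show ((eF hf i : Fin n)) = (Sfin f).orderEmbOfFin (card_Sfin hf) i from
      (Sfin f).coe_orderIsoOfFin_apply (card_Sfin hf) i]
    exact (congrFun hu i).symm
  funext y j
  unfold hF
  by_cases h : j ∈ Sfin f
  · rw [dif_pos h]
    obtain ⟨i, rfl⟩ := mem_Sfin_range h1 h2 h
    rw [h1]
    congr 1
    apply (eF hf).injective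
    apply Subtype.ext
    rw [(eF hf).apply_symm_apply]
    exact (hcoe i).symm
  · rw [dif_neg h]
    have hr : j ∉ Set.range ι := fun hr => h (by
      obtain ⟨i, rfl⟩ := hr
      exact hmem i)
    rw [h2 _ _ hr, h2 _ _ hr]

end Stmt14Aux
namespace Stmt14Aux

open CategoryTheory Opposite

noncomputable def iso_of_corep {C : Type*} [Category C] {A B : C}
    (e : ∀ Y : C, (A ⟶ Y) ≃ (B ⟶ Y))
    (nat : ∀ {Y Y' : C} (g : Y ⟶ Y') (f : A ⟶ Y), e Y' (f ≫ g) = e Y f ≫ g) :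
    A ≅ B := by
  refine ⟨(e B).symm (𝟙 B), e A (𝟙 A), ?_, ?_⟩
  · apply (e A).injective
    rw [nat (e A (𝟙 A)) ((e B).symm (𝟙 B)), Equiv.apply_symm_apply, Category.id_comp]
  · have h1 : (e B).symm (𝟙 B) ≫ e A (𝟙 A) = 𝟙 A := by
      apply (e A).injective
      rw [nat (e A (𝟙 A)) ((e B).symm (𝟙 B)), Equiv.apply_symm_apply, Category.id_comp]
    have h2 := nat (e A (𝟙 A) ≫ (e B).symm (𝟙 B)) ((e B).symm (𝟙 B))
    rw [← Category.assoc, h1, Category.id_comp, Equiv.apply_symm_apply,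
      Category.id_comp] at h2
    exact h2.symm

noncomputable def left_adjoint_obj_iso {C D : Type*} [Category C] [Category D]
    {L : C ⥤ D} {R : D ⥤ C} (adj : L ⊣ R) (X : C) (Z : D) (u : X ⟶ R.obj Z)
    (bij : ∀ Y : D, Function.Bijective (fun α : Z ⟶ Y => u ≫ R.map α)) :
    L.obj X ≅ Z := by
  refine iso_of_corep
    (fun Y => (adj.homEquiv X Y).trans (Equiv.ofBijective _ (bij Y)).symm) ?_
  intro Y Y' g f
  apply (Equiv.ofBijective _ (bij Y')).injective
  have lhs : (Equiv.ofBijective _ (bij Y'))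
      ((Equiv.ofBijective _ (bij Y')).symm ((adj.homEquiv X Y') (f ≫ g)))
      = (adj.homEquiv X Y') (f ≫ g) := Equiv.apply_symm_apply _ _
  refine lhs.trans ?_
  simp only [Equiv.trans_apply]
  have rhs : (Equiv.ofBijective (fun α : Z ⟶ Y' => u ≫ R.map α) (bij Y'))
      ((Equiv.ofBijective (fun α : Z ⟶ Y => u ≫ R.map α) (bij Y)).symm
        ((adj.homEquiv X Y) f) ≫ g)
      = (u ≫ R.map ((Equiv.ofBijective (fun α : Z ⟶ Y => u ≫ R.map α) (bij Y)).symm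
        ((adj.homEquiv X Y) f))) ≫ R.map g := by
    show u ≫ R.map (_ ≫ g) = _
    rw [R.map_comp, Category.assoc]
  rw [rhs]
  have mid : u ≫ R.map ((Equiv.ofBijective (fun α : Z ⟶ Y => u ≫ R.map α) (bij Y)).symm
        ((adj.homEquiv X Y) f)) = (adj.homEquiv X Y) f :=
    Equiv.apply_symm_apply (Equiv.ofBijective _ (bij Y)) _
  rw [mid, Adjunction.homEquiv_naturality_right]

end Stmt14Aux
namespace Stmt14Aux

open CategoryTheory Opposite

/-- Restriction functor. -/
abbrev Res : (TransObjᵒᵖ ⥤ Type) ⥤ (CubeObjᵒᵖ ⥤ Type) :=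
  (Functor.whiskeringLeft CubeObjᵒᵖ TransObjᵒᵖ Type).obj cubeInclusion.op

/-- The unit map for the representable case. -/
def uRep (n : ℕ) : yoneda.obj (⟨n⟩ : CubeObj) ⟶ Res.obj (yoneda.obj (⟨n⟩ : TransObj)) where
  app p := TypeCat.ofHom fun f => ⟨f.1, f.2.cotransverse⟩
  naturality p p' g := by ext f; exact Subtype.ext rfl

lemma bijRep (n : ℕ) (Y : TransObjᵒᵖ ⥤ Type) :
    Function.Bijective
      (fun α : yoneda.obj (⟨n⟩ : TransObj) ⟶ Y => uRep n ≫ Res.map α) := by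
  have key : ∀ (α : yoneda.obj (⟨n⟩ : TransObj) ⟶ Y) (q : TransObjᵒᵖ)
      (f : (yoneda.obj (⟨n⟩ : TransObj)).obj q),
      α.app q f = Y.map (Quiver.Hom.op f) (α.app (op ⟨n⟩) (𝟙 (⟨n⟩ : TransObj))) := by
    intro α q f
    have h := types_congr_hom (α.naturality (Quiver.Hom.op f)) (𝟙 (⟨n⟩ : TransObj))
    simp only [types_comp_apply] at h
    have e1 : (yoneda.obj (⟨n⟩ : TransObj)).map (Quiver.Hom.op f) (𝟙 (⟨n⟩ : TransObj))
        = f := Subtype.ext rfl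
    rw [e1] at h
    exact h
  constructor
  · intro α α' hαα'
    apply NatTrans.ext
    funext q; ext f
    show α.app q f = α'.app q f
    have h' : α.app (op (⟨n⟩ : TransObj)) (𝟙 (⟨n⟩ : TransObj))
        = α'.app (op (⟨n⟩ : TransObj)) (𝟙 (⟨n⟩ : TransObj)) :=
      types_congr_hom (congrFun (congrArg NatTrans.app hαα') (op (⟨n⟩ : CubeObj)))
        (⟨id, cocubical_id⟩ : ((⟨n⟩ : CubeObj) ⟶ (⟨n⟩ : CubeObj)))
    rw [key α q f, key α' q f, h']
  · intro β
    refine ⟨{ app := fun q => TypeCat.ofHom fun f => Y.map (Quiver.Hom.op f)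
                (β.app (op (⟨n⟩ : CubeObj)) (⟨id, cocubical_id⟩ :
                  ((⟨n⟩ : CubeObj) ⟶ (⟨n⟩ : CubeObj)))),
              naturality := ?_ }, ?_⟩
    · intro q q' g
      ext f
      show Y.map (Quiver.Hom.op (g.unop ≫ f)) _ = Y.map g (Y.map (Quiver.Hom.op f) _)
      rw [op_comp, Y.map_comp]
      rfl
    · apply NatTrans.ext
      funext p; ext c
      have h := types_congr_hom (β.naturality (Quiver.Hom.op c))
        (⟨id, cocubical_id⟩ : (yoneda.obj (⟨n⟩ : CubeObj)).obj (op (⟨n⟩ : CubeObj)))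
      simp only [types_comp_apply] at h
      exact h.symm

end Stmt14Aux
namespace Stmt14Aux

open CategoryTheory Opposite

/-- The unit map for the boundary case. -/
def uBd (n : ℕ) : boundaryCube n ⟶ Res.obj (boundaryTrans n) where
  app p := TypeCat.ofHom fun c => ⟨c.1, c.2.1.cotransverse, c.2.2⟩
  naturality p p' g := by ext c; exact Subtype.ext rfl

/-- Extension of a natural transformation on the cubical boundary to the
transverse boundary, via the canonical factorization. -/
noncomputable def bdExt (n : ℕ) (Y : TransObjᵒᵖ ⥤ Type)
    (β : boundaryCube n ⟶ Res.obj Y) : boundaryTrans n ⟶ Y where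
  app q := TypeCat.ofHom fun c =>
    Y.map (Quiver.Hom.op (⟨gF c.2.1, gF_cotransverse c.2.1⟩ :
        ((⟨q.unop.dim⟩ : TransObj) ⟶ (⟨q.unop.dim⟩ : TransObj))))
      (β.app (op (⟨q.unop.dim⟩ : CubeObj))
        (⟨hF c.2.1, hF_cocubical c.2.1, c.2.2⟩ :
          (boundaryCube n).obj (op (⟨q.unop.dim⟩ : CubeObj))))
  naturality q q' g := by
    ext c
    obtain ⟨f, hf, hlt⟩ := c
    have hm : Cotransverse g.unop.1 := g.unop.2
    have hfm : Cotransverse (f ∘ g.unop.1) := cotransverse_comp hm hf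
    have hlt' : q'.unop.dim < n := lt_of_le_of_lt hm.dim_le hlt
    let G : (⟨q.unop.dim⟩ : TransObj) ⟶ ⟨q.unop.dim⟩ := ⟨gF hf, gF_cotransverse hf⟩
    let G' : (⟨q'.unop.dim⟩ : TransObj) ⟶ ⟨q'.unop.dim⟩ := ⟨gF hfm, gF_cotransverse hfm⟩
    let K : (⟨q'.unop.dim⟩ : CubeObj) ⟶ ⟨q.unop.dim⟩ := ⟨kF hf hm, kF_cocubical hf hm⟩
    let KT : (⟨q'.unop.dim⟩ : TransObj) ⟶ ⟨q.unop.dim⟩ :=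
      ⟨kF hf hm, (kF_cocubical hf hm).cotransverse⟩
    have hβ := types_congr_hom (β.naturality (Quiver.Hom.op K))
      (⟨hF hf, hF_cocubical hf, hlt⟩ : (boundaryCube n).obj (op (⟨q.unop.dim⟩ : CubeObj)))
    change β.app _ ((boundaryCube n).map (Quiver.Hom.op K) ⟨hF hf, hF_cocubical hf, hlt⟩)
      = (Res.obj Y).map (Quiver.Hom.op K) (β.app _ ⟨hF hf, hF_cocubical hf, hlt⟩) at hβ
    have e1 : (boundaryCube n).map (Quiver.Hom.op K)
        (⟨hF hf, hF_cocubical hf, hlt⟩ : (boundaryCube n).obj (op (⟨q.unop.dim⟩ : CubeObj)))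
        = (⟨hF hfm, hF_cocubical hfm, hlt'⟩ :
            (boundaryCube n).obj (op (⟨q'.unop.dim⟩ : CubeObj))) :=
      Subtype.ext (funext fun y => hF_kF hf hm y)
    rw [e1] at hβ
    set X0 := β.app (op (⟨q.unop.dim⟩ : CubeObj))
      (⟨hF hf, hF_cocubical hf, hlt⟩ : (boundaryCube n).obj (op (⟨q.unop.dim⟩ : CubeObj)))
      with hX0
    have e4 : Y.map (Quiver.Hom.op G') ((Res.obj Y).map (Quiver.Hom.op K) X0)
        = Y.map (Quiver.Hom.op (G' ≫ KT)) X0 := by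
      rw [op_comp]
      exact (Y.map_comp_apply _ _ _).symm
    have e3 : Y.map (Quiver.Hom.op (g.unop ≫ G)) X0
        = Y.map g (Y.map (Quiver.Hom.op G) X0) := by
      rw [op_comp]
      exact Y.map_comp_apply _ _ _
    have e2 : G' ≫ KT = g.unop ≫ G := Subtype.ext (funext fun x => kF_gF hf hm x)
    show Y.map (Quiver.Hom.op G')
        (β.app (op (⟨q'.unop.dim⟩ : CubeObj))
          (⟨hF hfm, hF_cocubical hfm, hlt'⟩ :
            (boundaryCube n).obj (op (⟨q'.unop.dim⟩ : CubeObj))))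
      = Y.map g (Y.map (Quiver.Hom.op G) X0)
    rw [hβ, e4, e2]
    exact e3

lemma bijBd (n : ℕ) (Y : TransObjᵒᵖ ⥤ Type) :
    Function.Bijective (fun α : boundaryTrans n ⟶ Y => uBd n ≫ Res.map α) := by
  have key : ∀ (α : boundaryTrans n ⟶ Y) (q : TransObjᵒᵖ) (c : (boundaryTrans n).obj q),
      α.app q c = Y.map (Quiver.Hom.op (⟨gF c.2.1, gF_cotransverse c.2.1⟩ :
          ((⟨q.unop.dim⟩ : TransObj) ⟶ (⟨q.unop.dim⟩ : TransObj))))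
        (α.app (op (⟨q.unop.dim⟩ : TransObj))
          (⟨hF c.2.1, (hF_cocubical c.2.1).cotransverse, c.2.2⟩ :
            (boundaryTrans n).obj (op (⟨q.unop.dim⟩ : TransObj)))) := by
    intro α q c
    obtain ⟨f, hf, hlt⟩ := c
    have h := types_congr_hom (α.naturality (Quiver.Hom.op
        (⟨gF hf, gF_cotransverse hf⟩ :
          ((⟨q.unop.dim⟩ : TransObj) ⟶ (⟨q.unop.dim⟩ : TransObj)))))
      (⟨hF hf, (hF_cocubical hf).cotransverse, hlt⟩ :
        (boundaryTrans n).obj (op (⟨q.unop.dim⟩ : TransObj)))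
    change α.app _ ((boundaryTrans n).map (Quiver.Hom.op
        (⟨gF hf, gF_cotransverse hf⟩ : ((⟨q.unop.dim⟩ : TransObj) ⟶ (⟨q.unop.dim⟩ : TransObj))))
        ⟨hF hf, (hF_cocubical hf).cotransverse, hlt⟩)
      = Y.map (Quiver.Hom.op
        (⟨gF hf, gF_cotransverse hf⟩ : ((⟨q.unop.dim⟩ : TransObj) ⟶ (⟨q.unop.dim⟩ : TransObj))))
        (α.app _ ⟨hF hf, (hF_cocubical hf).cotransverse, hlt⟩) at h
    have e1 : (boundaryTrans n).map (Quiver.Hom.op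
        (⟨gF hf, gF_cotransverse hf⟩ :
          ((⟨q.unop.dim⟩ : TransObj) ⟶ (⟨q.unop.dim⟩ : TransObj))))
        (⟨hF hf, (hF_cocubical hf).cotransverse, hlt⟩ :
          (boundaryTrans n).obj (op (⟨q.unop.dim⟩ : TransObj)))
        = ⟨f, hf, hlt⟩ :=
      Subtype.ext (funext fun x => hF_gF hf x)
    rw [e1] at h
    exact h
  constructor
  · intro α α' hαα'
    apply NatTrans.ext
    funext q; ext c
    show α.app q c = α'.app q c
    rw [key α q c, key α' q c]
    have h' := types_congr_hom (congrFun (congrArg NatTrans.app hαα')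
        (op (⟨q.unop.dim⟩ : CubeObj)))
      (⟨hF c.2.1, hF_cocubical c.2.1, c.2.2⟩ :
        (boundaryCube n).obj (op (⟨q.unop.dim⟩ : CubeObj)))
    exact congrArg (Y.map (Quiver.Hom.op (⟨gF c.2.1, gF_cotransverse c.2.1⟩ :
      ((⟨q.unop.dim⟩ : TransObj) ⟶ (⟨q.unop.dim⟩ : TransObj))))) h'
  · intro β
    refine ⟨bdExt n Y β, ?_⟩
    apply NatTrans.ext
    funext p; ext c
    obtain ⟨φ, hφ, hlt⟩ := c
    have hco : Cotransverse φ := hφ.cotransverse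
    show Y.map (Quiver.Hom.op (⟨gF hco, gF_cotransverse hco⟩ :
        ((⟨p.unop.dim⟩ : TransObj) ⟶ (⟨p.unop.dim⟩ : TransObj))))
        (β.app (op (⟨p.unop.dim⟩ : CubeObj))
          (⟨hF hco, hF_cocubical hco, hlt⟩ :
            (boundaryCube n).obj (op (⟨p.unop.dim⟩ : CubeObj))))
      = β.app p ⟨φ, hφ, hlt⟩
    have e1 : (⟨gF hco, gF_cotransverse hco⟩ :
        ((⟨p.unop.dim⟩ : TransObj) ⟶ (⟨p.unop.dim⟩ : TransObj)))
        = 𝟙 (⟨p.unop.dim⟩ : TransObj) :=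
      Subtype.ext (gF_of_cocubical hφ hco)
    have e2 : (⟨hF hco, hF_cocubical hco, hlt⟩ :
        (boundaryCube n).obj (op (⟨p.unop.dim⟩ : CubeObj)))
        = ⟨φ, hφ, hlt⟩ := Subtype.ext (hF_of_cocubical hφ hco)
    rw [e1, e2, op_id]
    exact Y.map_id_apply _ _

end Stmt14Aux

/-- Let `L̂` be the left adjoint to the restriction functor along the
inclusion `ι : □ → □̂` (i.e. the left Kan extension along `ιᵒᵖ`).
Then `L̂(□[n]) ≅ □̂[n]` and `L̂(∂□[n]) ≅ ∂□̂[n]` for all `n ≥ 0`. -/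
theorem stmt14 (L : (CubeObjᵒᵖ ⥤ Type) ⥤ (TransObjᵒᵖ ⥤ Type))
    (adj : L ⊣ (Functor.whiskeringLeft CubeObjᵒᵖ TransObjᵒᵖ Type).obj cubeInclusion.op) :
    ∀ n : ℕ,
      Nonempty (L.obj (yoneda.obj (⟨n⟩ : CubeObj)) ≅ yoneda.obj (⟨n⟩ : TransObj)) ∧
      Nonempty (L.obj (boundaryCube n) ≅ boundaryTrans n) := by
  intro n
  exact ⟨⟨Stmt14Aux.left_adjoint_obj_iso adj _ _ (Stmt14Aux.uRep n) (Stmt14Aux.bijRep n)⟩,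
    ⟨Stmt14Aux.left_adjoint_obj_iso adj _ _ (Stmt14Aux.uBd n) (Stmt14Aux.bijBd n)⟩⟩
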